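/- For every λ ∈ Λ = ℂ ∖ {−2, −2ω, −2ω², 0, 1, ω, ω²} and every j ∈ {1, …, 12}, the conic Q_j(λ) : f_j(λ) = 0 is smooth: for every (x,y,z) ∈ ℂ³ ∖ {(0,0,0)} with f_j(λ)(x,y,z) = 0, the gradient (∂f_j(λ)/∂x, ∂f_j(λ)/∂y, ∂f_j(λ)/∂z) does not vanish at (x,y,z). -/
import Mathlib


open MvPolynomial

set_option maxHeartbeats 1000000

/-- The twelve conics `Q_j(λ) : f_j(λ) = 0` of the Hesse arrangement of conics,
as quadratic forms in `ℂ[x,y,z]` (variables `X 0 = x`, `X 1 = y`, `X 2 = z`),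
depending on the parameter `lam = λ` and on a primitive cube root of unity `ω`.
The index `j : Fin 12` corresponds to `f_{j+1}(λ)` of the paper. -/
noncomputable def hesseConic (ω lam : ℂ) : Fin 12 → MvPolynomial (Fin 3) ℂ :=
  ![X 0 ^ 2 + C (lam + 1) * (C ω * (X 0 * X 1) + C (ω ^ 2) * (X 0 * X 2) + X 1 * X 2)
      + C (ω ^ 2) * X 1 ^ 2 + C ω * X 2 ^ 2,
    X 0 ^ 2 + C (lam + 1) * (C (ω ^ 2) * (X 0 * X 1) + C ω * (X 0 * X 2) + X 1 * X 2)
      + C ω * X 1 ^ 2 + C (ω ^ 2) * X 2 ^ 2,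
    X 0 * X 1 - C lam * X 2 ^ 2,
    X 0 ^ 2 + C (ω * lam + 1) * (X 0 * X 1 + C ω * (X 0 * X 2) + C ω * (X 1 * X 2))
      + X 1 ^ 2 + C (ω ^ 2) * X 2 ^ 2,
    X 0 ^ 2 + C (ω ^ 2 * lam + 1) *
        (X 0 * X 1 + C (ω ^ 2) * (X 0 * X 2) + C (ω ^ 2) * (X 1 * X 2))
      + X 1 ^ 2 + C ω * X 2 ^ 2,
    X 0 ^ 2 + C (ω * lam + ω ^ 2) * (X 0 * X 1 + X 1 * X 2 + C ω * (X 0 * X 2))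
      + C ω * X 1 ^ 2 + X 2 ^ 2,
    - (C lam) * X 1 ^ 2 + X 0 * X 2,
    X 0 ^ 2 + C (ω ^ 2 * lam + ω) * (X 0 * X 1 + X 1 * X 2 + C (ω ^ 2) * (X 0 * X 2))
      + C (ω ^ 2) * X 1 ^ 2 + X 2 ^ 2,
    X 0 ^ 2 + C (lam + ω ^ 2) * (X 0 * X 1 + X 0 * X 2 + C (ω ^ 2) * (X 1 * X 2))
      + C ω * X 1 ^ 2 + C ω * X 2 ^ 2,
    X 0 ^ 2 + C (lam + ω) * (X 0 * X 1 + X 0 * X 2 + C ω * (X 1 * X 2))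
      + C (ω ^ 2) * (X 1 ^ 2 + X 2 ^ 2),
    C lam * X 0 ^ 2 - X 1 * X 2,
    X 0 ^ 2 + C (lam + 1) * (X 0 * X 1 + X 0 * X 2 + X 1 * X 2) + X 1 ^ 2 + X 2 ^ 2]

/-- Representative vectors in `ℂ³` of the nine points `p_k(λ)` of `𝒫₉(λ)`;
the index `k : Fin 9` corresponds to `p_{k+1}(λ)` of the paper. -/
noncomputable def hessePoint (ω lam : ℂ) : Fin 9 → Fin 3 → ℂ :=
  ![![lam, 1, 1], ![1, lam, 1], ![1, 1, lam],
    ![lam, ω, ω ^ 2], ![ω ^ 2, lam, ω], ![ω, ω ^ 2, lam],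
    ![lam, ω ^ 2, ω], ![ω, lam, ω ^ 2], ![ω ^ 2, ω, lam]]

/-- The set `Λ = ℂ ∖ {−2, −2ω, −2ω², 0, 1, ω, ω²}` of regular parameter values. -/
def hesseLambda (ω : ℂ) : Set ℂ :=
  {lam | lam ∉ ({-2, -2 * ω, -2 * ω ^ 2, 0, 1, ω, ω ^ 2} : Set ℂ)}

/-- For every `λ ∈ Λ` and every `j`, the conic `Q_j(λ) : f_j(λ) = 0`
is smooth: at every nonzero `(x,y,z) ∈ ℂ³` with `f_j(λ)(x,y,z) = 0`, the gradient of
`f_j(λ)` does not vanish. -/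
theorem stmt_6 (ω : ℂ) (hω : ω ^ 2 + ω + 1 = 0)
    (lam : ℂ) (hlam : lam ∈ hesseLambda ω) (j : Fin 12)
    (v : Fin 3 → ℂ) (hv : v ≠ 0) (hzero : eval v (hesseConic ω lam j) = 0) :
    ¬ ∀ i : Fin 3, eval v (pderiv i (hesseConic ω lam j)) = 0 := by
  simp only [hesseLambda, Set.mem_setOf_eq, Set.mem_insert_iff, Set.mem_singleton_iff,
    not_or] at hlam
  obtain ⟨hl1, hl2, hl3, hl4, hl5, hl6, hl7⟩ := hlam
  have hw0 : ω ≠ 0 := by intro h; rw [h] at hω; norm_num at hω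
  intro h
  have h0 := h 0; have h1 := h 1; have h2 := h 2
  clear h hzero
  fin_cases j
  · -- case f1
    replace h0 : eval v (pderiv (0:Fin 3) ((X 0 ^ 2 + C (lam + 1) * (C ω * (X 0 * X 1) + C (ω ^ 2) * (X 0 * X 2) + X 1 * X 2) + C (ω ^ 2) * X 1 ^ 2 + C ω * X 2 ^ 2) : MvPolynomial (Fin 3) ℂ)) = 0 := h0
    replace h1 : eval v (pderiv (1:Fin 3) ((X 0 ^ 2 + C (lam + 1) * (C ω * (X 0 * X 1) + C (ω ^ 2) * (X 0 * X 2) + X 1 * X 2) + C (ω ^ 2) * X 1 ^ 2 + C ω * X 2 ^ 2) : MvPolynomial (Fin 3) ℂ)) = 0 := h1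
    replace h2 : eval v (pderiv (2:Fin 3) ((X 0 ^ 2 + C (lam + 1) * (C ω * (X 0 * X 1) + C (ω ^ 2) * (X 0 * X 2) + X 1 * X 2) + C (ω ^ 2) * X 1 ^ 2 + C ω * X 2 ^ 2) : MvPolynomial (Fin 3) ℂ)) = 0 := h2
    simp [pderiv_X] at h0 h1 h2
    have e0 : (2*(lam-1)^2*(lam+2)) * v 0 = 0 := by linear_combination ((3) + (-2)*lam + (-1)*lam^2)*h0 + ((1) + (-1)*lam^2 + ω + (-1)*ω*lam^2)*h1 + ((-1)*ω + ω*lam^2)*h2 + ((-1)*(v 2) + (-2)*(v 0) + (-1)*lam*(v 2) + (-2)*lam*(v 0) + lam^2*(v 2) + (2)*lam^2*(v 0) + lam^3*(v 2) + (2)*lam^3*(v 0) + (-2)*ω*(v 1) + ω*(v 0) + ω*lam*(v 0) + (2)*ω*lam^2*(v 1) + (-1)*ω*lam^2*(v 0) + (-1)*ω*lam^3*(v 0))*hω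
    have e1 : (2*(lam-1)^2*(lam+2)) * v 1 = 0 := by linear_combination ((1) + (-1)*lam^2 + ω + (-1)*ω*lam^2)*h0 + ((3)*ω + (-2)*ω*lam + (-1)*ω*lam^2)*h1 + ((-1) + lam^2)*h2 + ((5)*(v 1) + (-2)*(v 0) + (-5)*lam*(v 1) + (-1)*lam^2*(v 1) + (2)*lam^2*(v 0) + lam^3*(v 1) + (-1)*ω*(v 2) + (-6)*ω*(v 1) + (-1)*ω*lam*(v 2) + (4)*ω*lam*(v 1) + ω*lam^2*(v 2) + (2)*ω*lam^2*(v 1) + ω*lam^3*(v 2))*hω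
    have e2 : (2*(lam-1)^2*(lam+2)) * v 2 = 0 := by linear_combination ((-1)*ω + ω*lam^2)*h0 + ((-1) + lam^2)*h1 + ((-3) + (2)*lam + lam^2 + (-3)*ω + (2)*ω*lam + ω*lam^2)*h2 + ((5)*(v 2) + (3)*(v 1) + (-5)*lam*(v 2) + lam*(v 1) + (-1)*lam^2*(v 2) + (-3)*lam^2*(v 1) + lam^3*(v 2) + (-1)*lam^3*(v 1) + ω*(v 2) + (3)*ω*(v 0) + ω*lam*(v 2) + ω*lam*(v 0) + (-1)*ω*lam^2*(v 2) + (-3)*ω*lam^2*(v 0) + (-1)*ω*lam^3*(v 2) + (-1)*ω*lam^3*(v 0))*hω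
    have hne : (2:ℂ)*(lam-1)^2*(lam+2) ≠ 0 := mul_ne_zero (mul_ne_zero two_ne_zero (pow_ne_zero 2 (sub_ne_zero.mpr hl5))) (fun hc => hl1 (by linear_combination hc))
    have hx := (mul_eq_zero.mp e0).resolve_left hne
    have hy := (mul_eq_zero.mp e1).resolve_left hne
    have hz := (mul_eq_zero.mp e2).resolve_left hne
    apply hv; funext i; fin_cases i
    · simpa using hx
    · simpa using hy
    · simpa using hz
  · -- case f2
    replace h0 : eval v (pderiv (0:Fin 3) ((X 0 ^ 2 + C (lam + 1) * (C (ω ^ 2) * (X 0 * X 1) + C ω * (X 0 * X 2) + X 1 * X 2) + C ω * X 1 ^ 2 + C (ω ^ 2) * X 2 ^ 2) : MvPolynomial (Fin 3) ℂ)) = 0 := h0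
    replace h1 : eval v (pderiv (1:Fin 3) ((X 0 ^ 2 + C (lam + 1) * (C (ω ^ 2) * (X 0 * X 1) + C ω * (X 0 * X 2) + X 1 * X 2) + C ω * X 1 ^ 2 + C (ω ^ 2) * X 2 ^ 2) : MvPolynomial (Fin 3) ℂ)) = 0 := h1
    replace h2 : eval v (pderiv (2:Fin 3) ((X 0 ^ 2 + C (lam + 1) * (C (ω ^ 2) * (X 0 * X 1) + C ω * (X 0 * X 2) + X 1 * X 2) + C ω * X 1 ^ 2 + C (ω ^ 2) * X 2 ^ 2) : MvPolynomial (Fin 3) ℂ)) = 0 := h2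
    simp [pderiv_X] at h0 h1 h2
    have e0 : (2*(lam-1)^2*(lam+2)) * v 0 = 0 := by linear_combination ((3) + (-2)*lam + (-1)*lam^2)*h0 + ((-1)*ω + ω*lam^2)*h1 + ((1) + (-1)*lam^2 + ω + (-1)*ω*lam^2)*h2 + ((-1)*(v 1) + (-2)*(v 0) + (-1)*lam*(v 1) + (-2)*lam*(v 0) + lam^2*(v 1) + (2)*lam^2*(v 0) + lam^3*(v 1) + (2)*lam^3*(v 0) + (-2)*ω*(v 2) + ω*(v 0) + ω*lam*(v 0) + (2)*ω*lam^2*(v 2) + (-1)*ω*lam^2*(v 0) + (-1)*ω*lam^3*(v 0))*hω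
    have e1 : (2*(lam-1)^2*(lam+2)) * v 1 = 0 := by linear_combination ((-1)*ω + ω*lam^2)*h0 + ((-3) + (2)*lam + lam^2 + (-3)*ω + (2)*ω*lam + ω*lam^2)*h1 + ((-1) + lam^2)*h2 + ((3)*(v 2) + (5)*(v 1) + lam*(v 2) + (-5)*lam*(v 1) + (-3)*lam^2*(v 2) + (-1)*lam^2*(v 1) + (-1)*lam^3*(v 2) + lam^3*(v 1) + ω*(v 1) + (3)*ω*(v 0) + ω*lam*(v 1) + ω*lam*(v 0) + (-1)*ω*lam^2*(v 1) + (-3)*ω*lam^2*(v 0) + (-1)*ω*lam^3*(v 1) + (-1)*ω*lam^3*(v 0))*hω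
    have e2 : (2*(lam-1)^2*(lam+2)) * v 2 = 0 := by linear_combination ((1) + (-1)*lam^2 + ω + (-1)*ω*lam^2)*h0 + ((-1) + lam^2)*h1 + ((3)*ω + (-2)*ω*lam + (-1)*ω*lam^2)*h2 + ((5)*(v 2) + (-2)*(v 0) + (-5)*lam*(v 2) + (-1)*lam^2*(v 2) + (2)*lam^2*(v 0) + lam^3*(v 2) + (-6)*ω*(v 2) + (-1)*ω*(v 1) + (4)*ω*lam*(v 2) + (-1)*ω*lam*(v 1) + (2)*ω*lam^2*(v 2) + ω*lam^2*(v 1) + ω*lam^3*(v 1))*hω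
    have hne : (2:ℂ)*(lam-1)^2*(lam+2) ≠ 0 := mul_ne_zero (mul_ne_zero two_ne_zero (pow_ne_zero 2 (sub_ne_zero.mpr hl5))) (fun hc => hl1 (by linear_combination hc))
    have hx := (mul_eq_zero.mp e0).resolve_left hne
    have hy := (mul_eq_zero.mp e1).resolve_left hne
    have hz := (mul_eq_zero.mp e2).resolve_left hne
    apply hv; funext i; fin_cases i
    · simpa using hx
    · simpa using hy
    · simpa using hz
  · -- case f3
    replace h0 : eval v (pderiv (0:Fin 3) ((X 0 * X 1 - C lam * X 2 ^ 2) : MvPolynomial (Fin 3) ℂ)) = 0 := h0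
    replace h1 : eval v (pderiv (1:Fin 3) ((X 0 * X 1 - C lam * X 2 ^ 2) : MvPolynomial (Fin 3) ℂ)) = 0 := h1
    replace h2 : eval v (pderiv (2:Fin 3) ((X 0 * X 1 - C lam * X 2 ^ 2) : MvPolynomial (Fin 3) ℂ)) = 0 := h2
    simp [pderiv_X] at h0 h1 h2
    rcases h2 with hc | hc
    · exact hl4 hc
    · apply hv; funext i; fin_cases i <;> simp_all
  · -- case f4
    replace h0 : eval v (pderiv (0:Fin 3) ((X 0 ^ 2 + C (ω * lam + 1) * (X 0 * X 1 + C ω * (X 0 * X 2) + C ω * (X 1 * X 2)) + X 1 ^ 2 + C (ω ^ 2) * X 2 ^ 2) : MvPolynomial (Fin 3) ℂ)) = 0 := h0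
    replace h1 : eval v (pderiv (1:Fin 3) ((X 0 ^ 2 + C (ω * lam + 1) * (X 0 * X 1 + C ω * (X 0 * X 2) + C ω * (X 1 * X 2)) + X 1 ^ 2 + C (ω ^ 2) * X 2 ^ 2) : MvPolynomial (Fin 3) ℂ)) = 0 := h1
    replace h2 : eval v (pderiv (2:Fin 3) ((X 0 ^ 2 + C (ω * lam + 1) * (X 0 * X 1 + C ω * (X 0 * X 2) + C ω * (X 1 * X 2)) + X 1 ^ 2 + C (ω ^ 2) * X 2 ^ 2) : MvPolynomial (Fin 3) ℂ)) = 0 := h2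
    simp [pderiv_X] at h0 h1 h2
    have e0 : (2*ω^2*(lam-ω^2)^2*(lam+2*ω^2)) * v 0 = 0 := by linear_combination ((-3) + (-2)*lam + (-3)*ω + (-1)*ω*lam^2)*h0 + ((1) + ω + ω*lam^2)*h1 + (lam^2 + (-1)*ω)*h2 + ((v 1) + (5)*(v 0) + (2)*lam*(v 1) + (4)*lam*(v 0) + (2)*ω*(v 2) + (2)*ω*lam*(v 2) + ω*lam*(v 1) + (-5)*ω*lam*(v 0) + (-4)*ω^2*(v 0) + (4)*ω^3*(v 0) + (6)*ω^3*lam*(v 0) + (-6)*ω^4*lam*(v 0) + (-4)*ω^5*(v 0) + (4)*ω^6*(v 0))*hω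
    have e1 : (2*ω^2*(lam-ω^2)^2*(lam+2*ω^2)) * v 1 = 0 := by linear_combination ((1) + ω + ω*lam^2)*h0 + ((-3) + (-2)*lam + (-3)*ω + (-1)*ω*lam^2)*h1 + (lam^2 + (-1)*ω)*h2 + ((5)*(v 1) + (v 0) + (4)*lam*(v 1) + (2)*lam*(v 0) + (2)*ω*(v 2) + (2)*ω*lam*(v 2) + (-5)*ω*lam*(v 1) + ω*lam*(v 0) + (-4)*ω^2*(v 1) + (4)*ω^3*(v 1) + (6)*ω^3*lam*(v 1) + (-6)*ω^4*lam*(v 1) + (-4)*ω^5*(v 1) + (4)*ω^6*(v 1))*hω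
    have e2 : (2*ω^2*(lam-ω^2)^2*(lam+2*ω^2)) * v 2 = 0 := by linear_combination (lam^2 + (-1)*ω)*h0 + (lam^2 + (-1)*ω)*h1 + ((3) + lam^2 + (-2)*ω*lam + ω*lam^2)*h2 + ((-3)*lam^2*(v 1) + (-3)*lam^2*(v 0) + (-2)*ω*lam^2*(v 2) + (2)*ω*lam^2*(v 1) + (2)*ω*lam^2*(v 0) + (-1)*ω*lam^3*(v 1) + (-1)*ω*lam^3*(v 0) + (-4)*ω^2*(v 2) + (4)*ω^3*(v 2) + (6)*ω^3*lam*(v 2) + (-6)*ω^4*lam*(v 2) + (-4)*ω^5*(v 2) + (4)*ω^6*(v 2))*hω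
    have hne : (2:ℂ)*ω^2*(lam-ω^2)^2*(lam+2*ω^2) ≠ 0 := mul_ne_zero (mul_ne_zero (mul_ne_zero two_ne_zero (pow_ne_zero 2 hw0)) (pow_ne_zero 2 (sub_ne_zero.mpr hl7))) (fun hc => hl3 (by linear_combination hc))
    have hx := (mul_eq_zero.mp e0).resolve_left hne
    have hy := (mul_eq_zero.mp e1).resolve_left hne
    have hz := (mul_eq_zero.mp e2).resolve_left hne
    apply hv; funext i; fin_cases i
    · simpa using hx
    · simpa using hy
    · simpa using hz
  · -- case f5
    replace h0 : eval v (pderiv (0:Fin 3) ((X 0 ^ 2 + C (ω ^ 2 * lam + 1) * (X 0 * X 1 + C (ω ^ 2) * (X 0 * X 2) + C (ω ^ 2) * (X 1 * X 2)) + X 1 ^ 2 + C ω * X 2 ^ 2) : MvPolynomial (Fin 3) ℂ)) = 0 := h0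
    replace h1 : eval v (pderiv (1:Fin 3) ((X 0 ^ 2 + C (ω ^ 2 * lam + 1) * (X 0 * X 1 + C (ω ^ 2) * (X 0 * X 2) + C (ω ^ 2) * (X 1 * X 2)) + X 1 ^ 2 + C ω * X 2 ^ 2) : MvPolynomial (Fin 3) ℂ)) = 0 := h1
    replace h2 : eval v (pderiv (2:Fin 3) ((X 0 ^ 2 + C (ω ^ 2 * lam + 1) * (X 0 * X 1 + C (ω ^ 2) * (X 0 * X 2) + C (ω ^ 2) * (X 1 * X 2)) + X 1 ^ 2 + C ω * X 2 ^ 2) : MvPolynomial (Fin 3) ℂ)) = 0 := h2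
    simp [pderiv_X] at h0 h1 h2
    have e0 : (2*ω*(lam-ω)^2*(lam+2*ω)) * v 0 = 0 := by linear_combination ((-2)*lam + lam^2 + (3)*ω + ω*lam^2)*h0 + ((-1)*lam^2 + (-1)*ω + (-1)*ω*lam^2)*h1 + ((1) + lam^2 + ω)*h2 + ((2)*lam*(v 1) + (4)*lam*(v 0) + lam^2*(v 1) + (-1)*lam^2*(v 0) + (-2)*ω*(v 2) + (-1)*ω*(v 1) + (-5)*ω*(v 0) + (-2)*ω*lam*(v 1) + (-4)*ω*lam*(v 0) + (-2)*ω*lam^2*(v 2) + (2)*ω*lam^3*(v 0) + (4)*ω^2*(v 0) + (2)*ω^2*lam*(v 2) + (2)*ω^2*lam^2*(v 2) + (-1)*ω^2*lam^3*(v 1) + (-1)*ω^2*lam^3*(v 0) + (-2)*ω^3*lam*(v 2) + (-1)*ω^3*lam*(v 1) + (-1)*ω^3*lam*(v 0))*hω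
    have e1 : (2*ω*(lam-ω)^2*(lam+2*ω)) * v 1 = 0 := by linear_combination ((-1)*lam^2 + (-1)*ω + (-1)*ω*lam^2)*h0 + ((-2)*lam + lam^2 + (3)*ω + ω*lam^2)*h1 + ((1) + lam^2 + ω)*h2 + ((4)*lam*(v 1) + (2)*lam*(v 0) + (-1)*lam^2*(v 1) + lam^2*(v 0) + (-2)*ω*(v 2) + (-5)*ω*(v 1) + (-1)*ω*(v 0) + (-4)*ω*lam*(v 1) + (-2)*ω*lam*(v 0) + (-2)*ω*lam^2*(v 2) + (2)*ω*lam^3*(v 1) + (4)*ω^2*(v 1) + (2)*ω^2*lam*(v 2) + (2)*ω^2*lam^2*(v 2) + (-1)*ω^2*lam^3*(v 1) + (-1)*ω^2*lam^3*(v 0) + (-2)*ω^3*lam*(v 2) + (-1)*ω^3*lam*(v 1) + (-1)*ω^3*lam*(v 0))*hω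
    have e2 : (2*ω*(lam-ω)^2*(lam+2*ω)) * v 2 = 0 := by linear_combination ((1) + lam^2 + ω)*h0 + ((1) + lam^2 + ω)*h1 + ((3) + (2)*lam + (2)*ω*lam + (-1)*ω*lam^2)*h2 + ((-3)*(v 1) + (-3)*(v 0) + (-3)*lam^2*(v 1) + (-3)*lam^2*(v 0) + (-6)*ω*(v 2) + (-4)*ω*lam*(v 2) + (3)*ω*lam^2*(v 1) + (3)*ω*lam^2*(v 0) + (2)*ω*lam^3*(v 2) + (4)*ω^2*(v 2) + (-3)*ω^2*lam*(v 1) + (-3)*ω^2*lam*(v 0) + (-2)*ω^2*lam^3*(v 2) + (-1)*ω^2*lam^3*(v 1) + (-1)*ω^2*lam^3*(v 0) + (-2)*ω^3*lam*(v 2) + (-2)*ω^3*lam^2*(v 1) + (-2)*ω^3*lam^2*(v 0) + ω^3*lam^3*(v 1) + ω^3*lam^3*(v 0))*hω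
    have hne : (2:ℂ)*ω*(lam-ω)^2*(lam+2*ω) ≠ 0 := mul_ne_zero (mul_ne_zero (mul_ne_zero two_ne_zero hw0) (pow_ne_zero 2 (sub_ne_zero.mpr hl6))) (fun hc => hl2 (by linear_combination hc))
    have hx := (mul_eq_zero.mp e0).resolve_left hne
    have hy := (mul_eq_zero.mp e1).resolve_left hne
    have hz := (mul_eq_zero.mp e2).resolve_left hne
    apply hv; funext i; fin_cases i
    · simpa using hx
    · simpa using hy
    · simpa using hz
  · -- case f6
    replace h0 : eval v (pderiv (0:Fin 3) ((X 0 ^ 2 + C (ω * lam + ω ^ 2) * (X 0 * X 1 + X 1 * X 2 + C ω * (X 0 * X 2)) + C ω * X 1 ^ 2 + X 2 ^ 2) : MvPolynomial (Fin 3) ℂ)) = 0 := h0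
    replace h1 : eval v (pderiv (1:Fin 3) ((X 0 ^ 2 + C (ω * lam + ω ^ 2) * (X 0 * X 1 + X 1 * X 2 + C ω * (X 0 * X 2)) + C ω * X 1 ^ 2 + X 2 ^ 2) : MvPolynomial (Fin 3) ℂ)) = 0 := h1
    replace h2 : eval v (pderiv (2:Fin 3) ((X 0 ^ 2 + C (ω * lam + ω ^ 2) * (X 0 * X 1 + X 1 * X 2 + C ω * (X 0 * X 2)) + C ω * X 1 ^ 2 + X 2 ^ 2) : MvPolynomial (Fin 3) ℂ)) = 0 := h2
    simp [pderiv_X] at h0 h1 h2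
    have e0 : (2*ω*(lam-ω)^2*(lam+2*ω)) * v 0 = 0 := by linear_combination ((-2)*lam + lam^2 + (3)*ω + ω*lam^2)*h0 + ((1) + lam^2 + ω)*h1 + ((-1)*lam^2 + (-1)*ω + (-1)*ω*lam^2)*h2 + ((4)*lam*(v 0) + (2)*lam^2*(v 2) + (-2)*lam^2*(v 0) + (2)*ω*(v 2) + (-2)*ω*(v 1) + (-6)*ω*(v 0) + (-1)*ω*lam*(v 2) + (-5)*ω*lam*(v 0) + (-1)*ω*lam^3*(v 2) + ω*lam^3*(v 0) + (-3)*ω^2*(v 2) + (5)*ω^2*(v 0) + (-1)*ω^2*lam^2*(v 2) + ω^2*lam^2*(v 0))*hω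
    have e1 : (2*ω*(lam-ω)^2*(lam+2*ω)) * v 1 = 0 := by linear_combination ((1) + lam^2 + ω)*h0 + ((3) + (2)*lam + (2)*ω*lam + (-1)*ω*lam^2)*h1 + ((1) + lam^2 + ω)*h2 + ((-2)*(v 2) + (-2)*(v 0) + (-2)*lam^2*(v 2) + (-2)*lam^2*(v 0) + (-6)*ω*(v 1) + (-3)*ω*lam*(v 2) + (-6)*ω*lam*(v 1) + (-3)*ω*lam*(v 0) + (-1)*ω^2*(v 2) + (4)*ω^2*(v 1) + (-1)*ω^2*(v 0))*hω
    have e2 : (2*ω*(lam-ω)^2*(lam+2*ω)) * v 2 = 0 := by linear_combination ((-1)*lam^2 + (-1)*ω + (-1)*ω*lam^2)*h0 + ((1) + lam^2 + ω)*h1 + ((-2)*lam + lam^2 + (3)*ω + ω*lam^2)*h2 + ((4)*lam*(v 2) + (-2)*lam^2*(v 2) + (2)*lam^2*(v 0) + (-6)*ω*(v 2) + (-2)*ω*(v 1) + (2)*ω*(v 0) + (-5)*ω*lam*(v 2) + (-1)*ω*lam*(v 0) + ω*lam^3*(v 2) + (-1)*ω*lam^3*(v 0) + (5)*ω^2*(v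 2) + (-3)*ω^2*(v 0) + ω^2*lam^2*(v 2) + (-1)*ω^2*lam^2*(v 0))*hω
    have hne : (2:ℂ)*ω*(lam-ω)^2*(lam+2*ω) ≠ 0 := mul_ne_zero (mul_ne_zero (mul_ne_zero two_ne_zero hw0) (pow_ne_zero 2 (sub_ne_zero.mpr hl6))) (fun hc => hl2 (by linear_combination hc))
    have hx := (mul_eq_zero.mp e0).resolve_left hne
    have hy := (mul_eq_zero.mp e1).resolve_left hne
    have hz := (mul_eq_zero.mp e2).resolve_left hne
    apply hv; funext i; fin_cases i
    · simpa using hx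
    · simpa using hy
    · simpa using hz
  · -- case f7
    replace h0 : eval v (pderiv (0:Fin 3) ((- (C lam) * X 1 ^ 2 + X 0 * X 2) : MvPolynomial (Fin 3) ℂ)) = 0 := h0
    replace h1 : eval v (pderiv (1:Fin 3) ((- (C lam) * X 1 ^ 2 + X 0 * X 2) : MvPolynomial (Fin 3) ℂ)) = 0 := h1
    replace h2 : eval v (pderiv (2:Fin 3) ((- (C lam) * X 1 ^ 2 + X 0 * X 2) : MvPolynomial (Fin 3) ℂ)) = 0 := h2
    simp [pderiv_X] at h0 h1 h2
    rcases h1 with hc | hc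
    · exact hl4 hc
    · apply hv; funext i; fin_cases i <;> simp_all
  · -- case f8
    replace h0 : eval v (pderiv (0:Fin 3) ((X 0 ^ 2 + C (ω ^ 2 * lam + ω) * (X 0 * X 1 + X 1 * X 2 + C (ω ^ 2) * (X 0 * X 2)) + C (ω ^ 2) * X 1 ^ 2 + X 2 ^ 2) : MvPolynomial (Fin 3) ℂ)) = 0 := h0
    replace h1 : eval v (pderiv (1:Fin 3) ((X 0 ^ 2 + C (ω ^ 2 * lam + ω) * (X 0 * X 1 + X 1 * X 2 + C (ω ^ 2) * (X 0 * X 2)) + C (ω ^ 2) * X 1 ^ 2 + X 2 ^ 2) : MvPolynomial (Fin 3) ℂ)) = 0 := h1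
    replace h2 : eval v (pderiv (2:Fin 3) ((X 0 ^ 2 + C (ω ^ 2 * lam + ω) * (X 0 * X 1 + X 1 * X 2 + C (ω ^ 2) * (X 0 * X 2)) + C (ω ^ 2) * X 1 ^ 2 + X 2 ^ 2) : MvPolynomial (Fin 3) ℂ)) = 0 := h2
    simp [pderiv_X] at h0 h1 h2
    have e0 : (2*ω^2*(lam-ω^2)^2*(lam+2*ω^2)) * v 0 = 0 := by linear_combination ((-3) + (-2)*lam + (-3)*ω + (-1)*ω*lam^2)*h0 + (lam^2 + (-1)*ω)*h1 + ((1) + ω + ω*lam^2)*h2 + ((-2)*(v 2) + (6)*(v 0) + (4)*lam*(v 0) + (2)*ω*(v 1) + (2)*ω*lam*(v 1) + (-4)*ω*lam*(v 0) + (-3)*ω*lam^2*(v 2) + ω*lam^2*(v 0) + (3)*ω^2*(v 2) + (-5)*ω^2*(v 0) + (3)*ω^2*lam^2*(v 2) + (-1)*ω^2*lam^2*(v 0) + (-1)*ω^2*lam^3*(v 2) + ω^2*lam^3*(v 0) + (4)*ω^3*(v 0) + (3)*ω^3*lam*(v 2) + (5)*ω^3*lam*(v 0) + ω^3*lam^3*(v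 2) + (-1)*ω^3*lam^3*(v 0) + (-6)*ω^4*lam*(v 0) + (-4)*ω^5*(v 0) + (4)*ω^6*(v 0))*hω
    have e1 : (2*ω^2*(lam-ω^2)^2*(lam+2*ω^2)) * v 1 = 0 := by linear_combination (lam^2 + (-1)*ω)*h0 + ((3) + lam^2 + (-2)*ω*lam + ω*lam^2)*h1 + (lam^2 + (-1)*ω)*h2 + ((-2)*lam^2*(v 2) + (-2)*lam^2*(v 0) + (-1)*ω*(v 2) + (-1)*ω*(v 0) + ω*lam^2*(v 2) + (-2)*ω*lam^2*(v 1) + ω*lam^2*(v 0) + ω^2*(v 2) + (-4)*ω^2*(v 1) + ω^2*(v 0) + (-1)*ω^2*lam*(v 2) + (-1)*ω^2*lam*(v 0) + (-1)*ω^2*lam^3*(v 2) + (-1)*ω^2*lam^3*(v 0) + (4)*ω^3*(v 1) + ω^3*lam*(v 2) + (6)*ω^3*lam*(v 1) + ω^3*lam*(v 0) + (-6)*ω^4*lam*(v 1) + (-4)*ω^5*(v 1) + (4)*ω^6*(v 1))*hω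
    have e2 : (2*ω^2*(lam-ω^2)^2*(lam+2*ω^2)) * v 2 = 0 := by linear_combination ((1) + ω + ω*lam^2)*h0 + (lam^2 + (-1)*ω)*h1 + ((-3) + (-2)*lam + (-3)*ω + (-1)*ω*lam^2)*h2 + ((6)*(v 2) + (-2)*(v 0) + (4)*lam*(v 2) + (2)*ω*(v 1) + (-4)*ω*lam*(v 2) + (2)*ω*lam*(v 1) + ω*lam^2*(v 2) + (-3)*ω*lam^2*(v 0) + (-5)*ω^2*(v 2) + (3)*ω^2*(v 0) + (-1)*ω^2*lam^2*(v 2) + (3)*ω^2*lam^2*(v 0) + ω^2*lam^3*(v 2) + (-1)*ω^2*lam^3*(v 0) + (4)*ω^3*(v 2) + (5)*ω^3*lam*(v 2) + (3)*ω^3*lam*(v 0) + (-1)*ω^3*lam^3*(v 2) + ω^3*lam^3*(v 0) + (-6)*ω^4*lam*(v 2) + (-4)*ω^5*(v 2) + (4)*ω^6*(v 2))*hω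
    have hne : (2:ℂ)*ω^2*(lam-ω^2)^2*(lam+2*ω^2) ≠ 0 := mul_ne_zero (mul_ne_zero (mul_ne_zero two_ne_zero (pow_ne_zero 2 hw0)) (pow_ne_zero 2 (sub_ne_zero.mpr hl7))) (fun hc => hl3 (by linear_combination hc))
    have hx := (mul_eq_zero.mp e0).resolve_left hne
    have hy := (mul_eq_zero.mp e1).resolve_left hne
    have hz := (mul_eq_zero.mp e2).resolve_left hne
    apply hv; funext i; fin_cases i
    · simpa using hx
    · simpa using hy
    · simpa using hz
  · -- case f9
    replace h0 : eval v (pderiv (0:Fin 3) ((X 0 ^ 2 + C (lam + ω ^ 2) * (X 0 * X 1 + X 0 * X 2 + C (ω ^ 2) * (X 1 * X 2)) + C ω * X 1 ^ 2 + C ω * X 2 ^ 2) : MvPolynomial (Fin 3) ℂ)) = 0 := h0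
    replace h1 : eval v (pderiv (1:Fin 3) ((X 0 ^ 2 + C (lam + ω ^ 2) * (X 0 * X 1 + X 0 * X 2 + C (ω ^ 2) * (X 1 * X 2)) + C ω * X 1 ^ 2 + C ω * X 2 ^ 2) : MvPolynomial (Fin 3) ℂ)) = 0 := h1
    replace h2 : eval v (pderiv (2:Fin 3) ((X 0 ^ 2 + C (lam + ω ^ 2) * (X 0 * X 1 + X 0 * X 2 + C (ω ^ 2) * (X 1 * X 2)) + C ω * X 1 ^ 2 + C ω * X 2 ^ 2) : MvPolynomial (Fin 3) ℂ)) = 0 := h2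
    simp [pderiv_X] at h0 h1 h2
    have e0 : (2*ω^2*(lam-ω^2)^2*(lam+2*ω^2)) * v 0 = 0 := by linear_combination ((-3) + (-2)*lam + (-3)*ω + (-1)*ω*lam^2)*h0 + ((-1) + (-1)*lam^2 + (-1)*ω*lam^2)*h1 + ((-1) + (-1)*lam^2 + (-1)*ω*lam^2)*h2 + ((6)*(v 0) + (3)*lam*(v 2) + (3)*lam*(v 1) + (6)*lam*(v 0) + (2)*lam^2*(v 2) + (2)*lam^2*(v 1) + (2)*lam^3*(v 0) + (2)*ω*(v 2) + (2)*ω*(v 1) + (-6)*ω*lam*(v 0) + (2)*ω*lam^2*(v 0) + ω*lam^3*(v 2) + ω*lam^3*(v 1) + ω^2*(v 2) + ω^2*(v 1) + (-4)*ω^2*(v 0) + (4)*ω^3*(v 0) + (6)*ω^3*lam*(v 0) + ω^3*lam^2*(v 2) + ω^3*lam^2*(v 1) + (-6)*ω^4*lam*(v 0) + (-4)*ω^5*(v 0) + (4)*ω^6*(v 0))*hω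
    have e1 : (2*ω^2*(lam-ω^2)^2*(lam+2*ω^2)) * v 1 = 0 := by linear_combination ((-1) + (-1)*lam^2 + (-1)*ω*lam^2)*h0 + ((2)*lam + (-1)*lam^2 + (3)*ω + (2)*ω*lam)*h1 + (lam^2 + (-1)*ω)*h2 + ((2)*(v 0) + lam*(v 2) + lam*(v 1) + lam^3*(v 2) + lam^3*(v 1) + (-2)*ω*(v 0) + (-1)*ω*lam*(v 2) + (-5)*ω*lam*(v 1) + (-2)*ω*lam*(v 0) + (-2)*ω*lam^2*(v 2) + (2)*ω*lam^2*(v 1) + (3)*ω^2*(v 2) + (-5)*ω^2*(v 1) + ω^2*lam^2*(v 2) + (-1)*ω^2*lam^2*(v 1) + (-3)*ω^3*(v 2) + (5)*ω^3*(v 1) + (-2)*ω^3*lam*(v 2) + (6)*ω^3*lam*(v 1) + (-6)*ω^4*lam*(v 1) + (-4)*ω^5*(v 1) + (4)*ω^6*(v 1))*hω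
    have e2 : (2*ω^2*(lam-ω^2)^2*(lam+2*ω^2)) * v 2 = 0 := by linear_combination ((-1) + (-1)*lam^2 + (-1)*ω*lam^2)*h0 + (lam^2 + (-1)*ω)*h1 + ((2)*lam + (-1)*lam^2 + (3)*ω + (2)*ω*lam)*h2 + ((2)*(v 0) + lam*(v 2) + lam*(v 1) + lam^3*(v 2) + lam^3*(v 1) + (-2)*ω*(v 0) + (-5)*ω*lam*(v 2) + (-1)*ω*lam*(v 1) + (-2)*ω*lam*(v 0) + (2)*ω*lam^2*(v 2) + (-2)*ω*lam^2*(v 1) + (-5)*ω^2*(v 2) + (3)*ω^2*(v 1) + (-1)*ω^2*lam^2*(v 2) + ω^2*lam^2*(v 1) + (5)*ω^3*(v 2) + (-3)*ω^3*(v 1) + (6)*ω^3*lam*(v 2) + (-2)*ω^3*lam*(v 1) + (-6)*ω^4*lam*(v 2) + (-4)*ω^5*(v 2) + (4)*ω^6*(v 2))*hω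
    have hne : (2:ℂ)*ω^2*(lam-ω^2)^2*(lam+2*ω^2) ≠ 0 := mul_ne_zero (mul_ne_zero (mul_ne_zero two_ne_zero (pow_ne_zero 2 hw0)) (pow_ne_zero 2 (sub_ne_zero.mpr hl7))) (fun hc => hl3 (by linear_combination hc))
    have hx := (mul_eq_zero.mp e0).resolve_left hne
    have hy := (mul_eq_zero.mp e1).resolve_left hne
    have hz := (mul_eq_zero.mp e2).resolve_left hne
    apply hv; funext i; fin_cases i
    · simpa using hx
    · simpa using hy
    · simpa using hz
  · -- case f10
    replace h0 : eval v (pderiv (0:Fin 3) ((X 0 ^ 2 + C (lam + ω) * (X 0 * X 1 + X 0 * X 2 + C ω * (X 1 * X 2)) + C (ω ^ 2) * (X 1 ^ 2 + X 2 ^ 2)) : MvPolynomial (Fin 3) ℂ)) = 0 := h0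
    replace h1 : eval v (pderiv (1:Fin 3) ((X 0 ^ 2 + C (lam + ω) * (X 0 * X 1 + X 0 * X 2 + C ω * (X 1 * X 2)) + C (ω ^ 2) * (X 1 ^ 2 + X 2 ^ 2)) : MvPolynomial (Fin 3) ℂ)) = 0 := h1
    replace h2 : eval v (pderiv (2:Fin 3) ((X 0 ^ 2 + C (lam + ω) * (X 0 * X 1 + X 0 * X 2 + C ω * (X 1 * X 2)) + C (ω ^ 2) * (X 1 ^ 2 + X 2 ^ 2)) : MvPolynomial (Fin 3) ℂ)) = 0 := h2
    simp [pderiv_X] at h0 h1 h2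
    have e0 : (2*ω*(lam-ω)^2*(lam+2*ω)) * v 0 = 0 := by linear_combination ((-2)*lam + lam^2 + (3)*ω + ω*lam^2)*h0 + ((-1) + ω*lam^2)*h1 + ((-1) + ω*lam^2)*h2 + ((6)*lam*(v 0) + (2)*lam^2*(v 2) + (2)*lam^2*(v 1) + (-2)*lam^2*(v 0) + (-1)*lam^3*(v 2) + (-1)*lam^3*(v 1) + (-4)*ω*(v 0) + (-6)*ω*lam*(v 0) + (-3)*ω*lam^2*(v 2) + (-3)*ω*lam^2*(v 1) + (4)*ω^2*(v 0))*hω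
    have e1 : (2*ω*(lam-ω)^2*(lam+2*ω)) * v 1 = 0 := by linear_combination ((-1) + ω*lam^2)*h0 + ((-3) + (-1)*lam^2 + (-3)*ω + (-2)*ω*lam)*h1 + ((1) + lam^2 + ω)*h2 + ((2)*(v 0) + lam*(v 2) + lam*(v 1) + (2)*lam*(v 0) + ω*(v 2) + ω*(v 1) + (2)*ω*lam*(v 2) + (-2)*ω*lam*(v 1) + (4)*ω^2*(v 1))*hω
    have e2 : (2*ω*(lam-ω)^2*(lam+2*ω)) * v 2 = 0 := by linear_combination ((-1) + ω*lam^2)*h0 + ((1) + lam^2 + ω)*h1 + ((-3) + (-1)*lam^2 + (-3)*ω + (-2)*ω*lam)*h2 + ((2)*(v 0) + lam*(v 2) + lam*(v 1) + (2)*lam*(v 0) + ω*(v 2) + ω*(v 1) + (-2)*ω*lam*(v 2) + (2)*ω*lam*(v 1) + (4)*ω^2*(v 2))*hω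
    have hne : (2:ℂ)*ω*(lam-ω)^2*(lam+2*ω) ≠ 0 := mul_ne_zero (mul_ne_zero (mul_ne_zero two_ne_zero hw0) (pow_ne_zero 2 (sub_ne_zero.mpr hl6))) (fun hc => hl2 (by linear_combination hc))
    have hx := (mul_eq_zero.mp e0).resolve_left hne
    have hy := (mul_eq_zero.mp e1).resolve_left hne
    have hz := (mul_eq_zero.mp e2).resolve_left hne
    apply hv; funext i; fin_cases i
    · simpa using hx
    · simpa using hy
    · simpa using hz
  · -- case f11
    replace h0 : eval v (pderiv (0:Fin 3) ((C lam * X 0 ^ 2 - X 1 * X 2) : MvPolynomial (Fin 3) ℂ)) = 0 := h0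
    replace h1 : eval v (pderiv (1:Fin 3) ((C lam * X 0 ^ 2 - X 1 * X 2) : MvPolynomial (Fin 3) ℂ)) = 0 := h1
    replace h2 : eval v (pderiv (2:Fin 3) ((C lam * X 0 ^ 2 - X 1 * X 2) : MvPolynomial (Fin 3) ℂ)) = 0 := h2
    simp [pderiv_X] at h0 h1 h2
    rcases h0 with hc | hc
    · exact hl4 hc
    · apply hv; funext i; fin_cases i <;> simp_all
  · -- case f12
    replace h0 : eval v (pderiv (0:Fin 3) ((X 0 ^ 2 + C (lam + 1) * (X 0 * X 1 + X 0 * X 2 + X 1 * X 2) + X 1 ^ 2 + X 2 ^ 2) : MvPolynomial (Fin 3) ℂ)) = 0 := h0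
    replace h1 : eval v (pderiv (1:Fin 3) ((X 0 ^ 2 + C (lam + 1) * (X 0 * X 1 + X 0 * X 2 + X 1 * X 2) + X 1 ^ 2 + X 2 ^ 2) : MvPolynomial (Fin 3) ℂ)) = 0 := h1
    replace h2 : eval v (pderiv (2:Fin 3) ((X 0 ^ 2 + C (lam + 1) * (X 0 * X 1 + X 0 * X 2 + X 1 * X 2) + X 1 ^ 2 + X 2 ^ 2) : MvPolynomial (Fin 3) ℂ)) = 0 := h2
    simp [pderiv_X] at h0 h1 h2
    have e0 : (2*(lam-1)^2*(lam+2)) * v 0 = 0 := by linear_combination ((3) + (-2)*lam + (-1)*lam^2)*h0 + ((-1) + lam^2)*h1 + ((-1) + lam^2)*h2 + (0)*hω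
    have e1 : (2*(lam-1)^2*(lam+2)) * v 1 = 0 := by linear_combination ((-1) + lam^2)*h0 + ((3) + (-2)*lam + (-1)*lam^2)*h1 + ((-1) + lam^2)*h2 + (0)*hω
    have e2 : (2*(lam-1)^2*(lam+2)) * v 2 = 0 := by linear_combination ((-1) + lam^2)*h0 + ((-1) + lam^2)*h1 + ((3) + (-2)*lam + (-1)*lam^2)*h2 + (0)*hω
    have hne : (2:ℂ)*(lam-1)^2*(lam+2) ≠ 0 := mul_ne_zero (mul_ne_zero two_ne_zero (pow_ne_zero 2 (sub_ne_zero.mpr hl5))) (fun hc => hl1 (by linear_combination hc))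
    have hx := (mul_eq_zero.mp e0).resolve_left hne
    have hy := (mul_eq_zero.mp e1).resolve_left hne
    have hz := (mul_eq_zero.mp e2).resolve_left hne
    apply hv; funext i; fin_cases i
    · simpa using hx
    · simpa using hy
    · simpa using hz
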